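/- Let V be a valuation domain with quotient field K and infinite residue field, let I be a fractional ideal of V and α ∈ K. Then α + I is the set of pseudo-limits of some pseudo-stationary sequence in K if and only if I is a principal fractional ideal. -/

import Mathlib

open scoped Pointwise Classical

section Defs

variable {K : Type*} [Field K] {Γ : Type*} [LinearOrderedCommGroupWithZero Γ]
variable {Λ : Type*} [LinearOrder Λ]

/-- `E = {s ν}` is pseudo-convergent: (additively) `v(s_ρ−s_ν) < v(s_σ−s_ρ)` for `ν<ρ<σ`.
In Mathlib's multiplicative convention this reads `v (s σ - s ρ) < v (s ρ - s ν)`. -/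
def IsPseudoConvergent (v : Valuation K Γ) (s : Λ → K) : Prop :=
  ∀ ⦃ν ρ σ : Λ⦄, ν < ρ → ρ < σ → v (s σ - s ρ) < v (s ρ - s ν)

/-- `E = {s ν}` is pseudo-divergent: (additively) `v(s_ρ−s_ν) > v(s_σ−s_ρ)` for `ν<ρ<σ`. -/
def IsPseudoDivergent (v : Valuation K Γ) (s : Λ → K) : Prop :=
  ∀ ⦃ν ρ σ : Λ⦄, ν < ρ → ρ < σ → v (s ρ - s ν) < v (s σ - s ρ)

/-- `E = {s ν}` is pseudo-stationary: the terms are distinct and all pairwise differences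
have the same (nonzero) value. -/
def IsPseudoStationary (v : Valuation K Γ) (s : Λ → K) : Prop :=
  (∀ ⦃ν μ : Λ⦄, ν ≠ μ → s ν ≠ s μ) ∧
    ∀ ⦃ν μ ν' μ' : Λ⦄, ν ≠ μ → ν' ≠ μ' → v (s ν - s μ) = v (s ν' - s μ')

/-- A pseudo-monotone sequence: pseudo-convergent, pseudo-divergent or pseudo-stationary. -/
def IsPseudoMonotone (v : Valuation K Γ) (s : Λ → K) : Prop :=
  IsPseudoConvergent v s ∨ IsPseudoDivergent v s ∨ IsPseudoStationary v s

/-- `α` is a pseudo-limit of the pseudo-convergent sequence `s`: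
`v(α − s_ν) = δ_ν` for all `ν`, where `δ_ν = v(s_ρ − s_ν)` for any `ρ > ν`. -/
def IsPseudoLimitPcv (v : Valuation K Γ) (s : Λ → K) (α : K) : Prop :=
  ∀ ⦃ν ρ : Λ⦄, ν < ρ → v (α - s ν) = v (s ρ - s ν)

/-- `α` is a pseudo-limit of the pseudo-divergent sequence `s`:
`v(α − s_ν) = δ_ν` for all sufficiently large `ν`, where `δ_ν = v(s_ρ − s_ν)` for any `ρ < ν`. -/
def IsPseudoLimitPdv (v : Valuation K Γ) (s : Λ → K) (α : K) : Prop :=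
  ∃ N : Λ, ∀ ⦃ν : Λ⦄, N ≤ ν → ∀ ⦃ρ : Λ⦄, ρ < ν → v (α - s ν) = v (s ρ - s ν)

/-- `α` is a pseudo-limit of the pseudo-stationary sequence `s`:
`v(α − s_ν) = δ` for all sufficiently large `ν`, where `δ` is the breadth. -/
def IsPseudoLimitPst (v : Valuation K Γ) (s : Λ → K) (α : K) : Prop :=
  ∃ N : Λ, ∀ ⦃ν : Λ⦄, N ≤ ν → ∀ ⦃μ μ' : Λ⦄, μ ≠ μ' → v (α - s ν) = v (s μ - s μ')

/-- `α` is a pseudo-limit of a strictly pseudo-monotone sequence `s`. -/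
def IsPseudoLimitSPM (v : Valuation K Γ) (s : Λ → K) (α : K) : Prop :=
  (IsPseudoConvergent v s ∧ IsPseudoLimitPcv v s α) ∨
    (IsPseudoDivergent v s ∧ IsPseudoLimitPdv v s α)

/-- The breadth ideal of a pseudo-convergent sequence:
(additively) `{x : v(x) > δ_ν for all ν}`. -/
def BreadthPcv (v : Valuation K Γ) (s : Λ → K) : Set K :=
  {x : K | ∀ ⦃ν ρ : Λ⦄, ν < ρ → v x < v (s ρ - s ν)}

/-- The breadth ideal of a pseudo-divergent sequence:
(additively) `{x : v(x) > δ_ν for some ν}`. -/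
def BreadthPdv (v : Valuation K Γ) (s : Λ → K) : Set K :=
  {x : K | ∃ ν ρ : Λ, ρ < ν ∧ v x < v (s ρ - s ν)}

/-- The breadth ideal of a pseudo-stationary sequence: (additively) `{x : v(x) ≥ δ}`. -/
def BreadthPst (v : Valuation K Γ) (s : Λ → K) : Set K :=
  {x : K | ∀ ⦃ν μ : Λ⦄, ν ≠ μ → v x ≤ v (s ν - s μ)}

/-- The breadth ideal of a sequence which is definitively either pseudo-convergent or
pseudo-stationary: `{x : v(x) ≤ v(s ρ - s ν)` for all sufficiently large `ν < ρ}`. -/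
def BreadthCvStat (v : Valuation K Γ) (s : Λ → K) : Set K :=
  {x : K | ∃ N : Λ, ∀ ⦃ν ρ : Λ⦄, N ≤ ν → ν < ρ → v x ≤ v (s ρ - s ν)}

/-- The ring `V_E` of rational functions mapping the tail of `E` into the valuation ring,
as a subset of `K(X)`. -/
def VESet (v : Valuation K Γ) (s : Λ → K) : Set (RatFunc K) :=
  {φ : RatFunc K | ∃ N : Λ, ∀ ⦃ν : Λ⦄, N ≤ ν → v (RatFunc.eval (RingHom.id K) (s ν) φ) ≤ 1}

end Defs

section FracIdeals

variable {K : Type*} [Field K]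

/-- `I` is a fractional ideal of the valuation subring `A` of `K`. -/
def IsFractionalSub (A : ValuationSubring K) (I : Submodule A K) : Prop :=
  ∃ a : K, a ∈ A ∧ a ≠ 0 ∧ ∀ x ∈ I, a * x ∈ A

/-- `I` is strictly divisorial: it equals the intersection of all principal fractional
ideals properly containing it. -/
def IsStrictlyDivisorial (A : ValuationSubring K) (I : Submodule A K) : Prop :=
  I = ⨅ c ∈ {c : K | I < Submodule.span A {c}}, Submodule.span A {c}

end FracIdeals

universe u

section Aux

variable {K : Type u} [Field K]

private lemma val_mem_span (A : ValuationSubring K) {c : K} (hc : c ≠ 0) {x : K} :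
    x ∈ Submodule.span A {c} ↔ A.valuation x ≤ A.valuation c := by
  rw [Submodule.mem_span_singleton]
  constructor
  · rintro ⟨a, rfl⟩
    rw [Algebra.smul_def]
    show A.valuation ((a : K) * c) ≤ _
    rw [map_mul]
    calc A.valuation (a : K) * A.valuation c ≤ 1 * A.valuation c :=
          mul_le_mul_left (A.valuation_le_one a) _
      _ = A.valuation c := one_mul _
  · intro h
    have hvc : A.valuation c ≠ 0 := (Valuation.ne_zero_iff _).mpr hc
    have hdiv : A.valuation (x / c) ≤ 1 := by
      rw [Valuation.map_div]; exact (div_le_one₀ (zero_lt_iff.mpr hvc)).mpr h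
    refine ⟨⟨x / c, A.mem_of_valuation_le_one _ hdiv⟩, ?_⟩
    rw [Algebra.smul_def]
    show x / c * c = x
    field_simp

private lemma val_sub_eq_one (A : ValuationSubring K) {b b' : A}
    (h : IsLocalRing.residue A b ≠ IsLocalRing.residue A b') :
    A.valuation ((b : K) - (b' : K)) = 1 := by
  have hres : IsLocalRing.residue A (b - b') ≠ 0 := by
    rw [map_sub]; exact sub_ne_zero.mpr h
  have hunit : IsUnit (b - b') := by
    by_contra hu
    exact hres (Ideal.Quotient.eq_zero_iff_mem.mpr
      ((IsLocalRing.mem_maximalIdeal _).mpr (mem_nonunits_iff.mpr hu)))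
  obtain ⟨u, hu⟩ := hunit
  have : ((b : K) - (b' : K)) = ((u : A) : K) := by rw [hu]; push_cast; ring
  rw [this]
  exact A.valuation_unit u

end Aux


/-- Let `V` be a valuation domain with quotient field `K` and infinite
residue field, `I` a (nonzero) fractional ideal of `V` and `α ∈ K`. Then `α + I` is the set
of pseudo-limits of some pseudo-stationary sequence in `K` if and only if `I` is a principal
fractional ideal. -/
theorem stmt5 {K : Type u} [Field K] (A : ValuationSubring K)
    [Infinite (IsLocalRing.ResidueField A)] (I : Submodule A K)
    (hfrac : IsFractionalSub A I) (hI0 : I ≠ ⊥) (α : K) :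
    (∃ (Λ : Type u) (_ : LinearOrder Λ) (_ : WellFoundedLT Λ) (_ : Nonempty Λ) (s : Λ → K),
        (∀ ν : Λ, ∃ ρ : Λ, ν < ρ) ∧ IsPseudoStationary A.valuation s ∧
        {β : K | IsPseudoLimitPst A.valuation s β} = (α + ·) '' (I : Set K)) ↔
      ∃ c : K, I = Submodule.span A {c} := by
  constructor
  · -- Forward direction: the pseudo-limit set of a pseudo-stationary sequence is a
    -- translate of a principal fractional ideal.
    rintro ⟨Λ, _, _, hne, s, hcof, ⟨hdist, hval⟩, hset⟩
    obtain ⟨ν0⟩ := hne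
    obtain ⟨ρ0, hρ0⟩ := hcof ν0
    set v := A.valuation with hv
    set δ := v (s ρ0 - s ν0) with hδ
    have hδeq : ∀ ⦃μ μ' : Λ⦄, μ ≠ μ' → v (s μ - s μ') = δ := fun μ μ' h => hval h (ne_of_gt hρ0)
    have hcne : s ρ0 - s ν0 ≠ 0 := sub_ne_zero.mpr (hdist (ne_of_gt hρ0))
    refine ⟨s ρ0 - s ν0, ?_⟩
    -- The pseudo-limit set is exactly `{β | v (β - s ν0) ≤ δ}`.
    have hP : ∀ β : K, IsPseudoLimitPst v s β ↔ v (β - s ν0) ≤ δ := by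
      intro β
      constructor
      · rintro ⟨N, hN⟩
        obtain ⟨ρ, hρ⟩ := hcof (max N ν0)
        have hρN : N ≤ ρ := le_of_lt (lt_of_le_of_lt (le_max_left _ _) hρ)
        have hρν0 : ν0 < ρ := lt_of_le_of_lt (le_max_right _ _) hρ
        have h1 : v (β - s ρ) = δ := hN hρN (ne_of_gt hρ0)
        have h2 : v (s ν0 - s ρ) = δ := hδeq (ne_of_lt hρν0)
        have h3 : β - s ν0 = (β - s ρ) - (s ν0 - s ρ) := by ring
        calc v (β - s ν0) = v ((β - s ρ) - (s ν0 - s ρ)) := by rw [← h3]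
          _ ≤ max (v (β - s ρ)) (v (s ν0 - s ρ)) := Valuation.map_sub _ _ _
          _ ≤ δ := by rw [h1, h2]; exact max_le le_rfl le_rfl
      · intro h
        -- For every `ν ≠ ν0`, `v (β - s ν) ≤ δ`, with equality except for at most one `ν`.
        have hle : ∀ ⦃ν : Λ⦄, ν ≠ ν0 → v (β - s ν) ≤ δ := by
          intro ν hν
          have h3 : β - s ν = (β - s ν0) - (s ν - s ν0) := by ring
          calc v (β - s ν) = v ((β - s ν0) - (s ν - s ν0)) := by rw [← h3]
            _ ≤ max (v (β - s ν0)) (v (s ν - s ν0)) := Valuation.map_sub _ _ _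
            _ ≤ δ := by rw [hδeq hν]; exact max_le h le_rfl
        have huniq : ∀ ⦃ν μ : Λ⦄, ν ≠ μ → v (β - s ν) < δ → v (β - s μ) < δ → False := by
          intro ν μ hνμ h1 h2
          have h3 : s μ - s ν = (β - s ν) - (β - s μ) := by ring
          have h4 : v (s μ - s ν) = δ := hδeq (fun h => hνμ h.symm)
          have : δ ≤ max (v (β - s ν)) (v (β - s μ)) := by
            rw [← h4, h3]; exact Valuation.map_sub _ _ _
          exact absurd this (not_le.mpr (max_lt h1 h2))
        by_cases hb : ∃ ν : Λ, ν ≠ ν0 ∧ v (β - s ν) < δ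
        · obtain ⟨ν1, hν1, hv1⟩ := hb
          obtain ⟨N, hN⟩ := hcof (max ν0 ν1)
          refine ⟨N, fun ν hν μ μ' hμ => ?_⟩
          rw [hδeq hμ]
          have hνν0 : ν ≠ ν0 :=
            ne_of_gt (lt_of_le_of_lt (le_max_left _ _) (lt_of_lt_of_le hN hν))
          have hνν1 : ν ≠ ν1 :=
            ne_of_gt (lt_of_le_of_lt (le_max_right _ _) (lt_of_lt_of_le hN hν))
          rcases lt_or_eq_of_le (hle hνν0) with hlt | heq
          · exact absurd (huniq hνν1 hlt hv1) (fun h => h)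
          · exact heq
        · push_neg at hb
          refine ⟨ρ0, fun ν hν μ μ' hμ => ?_⟩
          rw [hδeq hμ]
          have hνν0 : ν ≠ ν0 := ne_of_gt (lt_of_lt_of_le hρ0 hν)
          exact le_antisymm (hle hνν0) (hb ν hνν0)
    -- Translate the description of the pseudo-limit set into a description of `I`.
    have hiff : ∀ x : K, x ∈ I ↔ v (α + x - s ν0) ≤ δ := by
      intro x
      rw [← hP (α + x)]
      constructor
      · intro hx
        have : (α + x) ∈ {β : K | IsPseudoLimitPst v s β} := by
          rw [hset]; exact ⟨x, hx, rfl⟩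
        exact this
      · intro hx
        have : (α + x) ∈ (α + ·) '' (I : Set K) := by rw [← hset]; exact hx
        obtain ⟨y, hy, hxy⟩ := this
        have : y = x := by
          have := hxy; simp only at this; linear_combination this
        rwa [← this]
    have hα : v (α - s ν0) ≤ δ := by
      have := (hiff 0).mp I.zero_mem
      simpa using this
    ext x
    rw [val_mem_span A hcne]
    rw [hiff x]
    constructor
    · intro h
      have h3 : x = (α + x - s ν0) - (α - s ν0) := by ring
      calc v x = v ((α + x - s ν0) - (α - s ν0)) := by rw [← h3]
        _ ≤ max (v (α + x - s ν0)) (v (α - s ν0)) := Valuation.map_sub _ _ _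
        _ ≤ δ := max_le h hα
    · intro h
      have h3 : α + x - s ν0 = (α - s ν0) + x := by ring
      rw [h3]
      calc v ((α - s ν0) + x) ≤ max (v (α - s ν0)) (v x) := Valuation.map_add _ _ _
        _ ≤ δ := max_le hα h
  · -- Backward direction: construct a pseudo-stationary sequence whose pseudo-limit set
    -- is `α + I`, using infinitely many distinct residues.
    rintro ⟨c, hc⟩
    have hcne : c ≠ 0 := by
      rintro rfl
      exact hI0 (by rw [hc, Submodule.span_zero_singleton])
    set v := A.valuation with hv
    have hvc : v c ≠ 0 := (Valuation.ne_zero_iff _).mpr hcne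
    -- Choose representatives of infinitely many distinct residues.
    set f : ℕ ↪ IsLocalRing.ResidueField A := Infinite.natEmbedding _ with hf
    have hsurj := IsLocalRing.residue_surjective (R := A)
    choose a ha using fun n : ℕ => hsurj (f n)
    -- The sequence.
    set s : ULift.{u} ℕ → K := fun n => α + c * (a n.down : K) with hs
    have hsv : ∀ ⦃n m : ULift.{u} ℕ⦄, n ≠ m → v (s n - s m) = v c := by
      intro n m hnm
      have hdm : n.down ≠ m.down := fun h => hnm (ULift.down_injective h)
      have hres : IsLocalRing.residue A (a n.down) ≠ IsLocalRing.residue A (a m.down) := by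
        rw [ha, ha]; exact fun h => hdm (f.injective h)
      have h1 : s n - s m = c * ((a n.down : K) - (a m.down : K)) := by
        simp only [hs]; ring
      rw [h1, map_mul, val_sub_eq_one A hres, mul_one]
    refine ⟨ULift.{u} ℕ, inferInstance,
      (show StrictMono (ULift.down : ULift.{u} ℕ → ℕ) from fun _ _ h => h).wellFoundedLT,
      ⟨⟨0⟩⟩, s, fun ν => ⟨⟨ν.down + 1⟩, Nat.lt_succ_self _⟩, ⟨?_, ?_⟩, ?_⟩
    · intro n m hnm
      have := hsv hnm
      intro hEq
      rw [hEq, sub_self, map_zero] at this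
      exact hvc this.symm
    · intro ν μ ν' μ' h h'
      rw [hsv h, hsv h']
    · ext β
      simp only [Set.mem_setOf_eq, Set.mem_image]
      constructor
      · rintro ⟨N, hN⟩
        refine ⟨β - α, ?_, by ring⟩
        have h01 : (⟨0⟩ : ULift.{u} ℕ) ≠ ⟨1⟩ := by
          intro h; exact absurd (congrArg ULift.down h) (by simp)
        have h1 : v (β - s N) = v c := by
          rw [hN le_rfl h01]; exact hsv h01
        rw [SetLike.mem_coe, hc, val_mem_span A hcne]
        have h3 : β - α = (β - s N) + c * (a N.down : K) := by simp only [hs]; ring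
        rw [h3]
        calc v ((β - s N) + c * (a N.down : K))
            ≤ max (v (β - s N)) (v (c * (a N.down : K))) := Valuation.map_add _ _ _
          _ ≤ v c := by
              refine max_le (le_of_eq h1) ?_
              rw [map_mul]
              calc v c * v (a N.down : K) ≤ v c * 1 :=
                    mul_le_mul_right (A.valuation_le_one _) _
                _ = v c := mul_one _
      · rintro ⟨x, hxI, rfl⟩
        have hx : v x ≤ v c := by
          rw [SetLike.mem_coe, hc, val_mem_span A hcne] at hxI; exact hxI
        have hdiv : v (x / c) ≤ 1 := by
          rw [Valuation.map_div]; exact (div_le_one₀ (zero_lt_iff.mpr hvc)).mpr hx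
        set t : A := ⟨x / c, A.mem_of_valuation_le_one _ hdiv⟩ with ht
        have hxc : x = c * (t : K) := by
          show x = c * (x / c); field_simp
        have hgood : ∀ n : ℕ, IsLocalRing.residue A t ≠ IsLocalRing.residue A (a n) →
            v (α + x - s ⟨n⟩) = v c := by
          intro n hres
          have h1 : α + x - s ⟨n⟩ = c * ((t : K) - (a n : K)) := by
            have htK : (t : K) = x / c := rfl
            simp only [hs, htK]
            field_simp
            ring
          rw [h1, map_mul, val_sub_eq_one A hres, mul_one]
        by_cases hb : ∃ n : ℕ, f n = IsLocalRing.residue A t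
        · obtain ⟨n0, hn0⟩ := hb
          refine ⟨⟨n0 + 1⟩, fun ν hν μ μ' hμ => ?_⟩
          rw [hsv hμ]
          have hνn0 : ν.down ≠ n0 := by
            have : n0 + 1 ≤ ν.down := hν
            omega
          have hres : IsLocalRing.residue A t ≠ IsLocalRing.residue A (a ν.down) := by
            rw [ha]
            intro h
            exact hνn0 (f.injective (by rw [hn0, h])).symm
          have := hgood ν.down hres
          simpa using this
        · push_neg at hb
          refine ⟨⟨0⟩, fun ν hν μ μ' hμ => ?_⟩
          rw [hsv hμ]
          have hres : IsLocalRing.residue A t ≠ IsLocalRing.residue A (a ν.down) := by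
            rw [ha]; exact fun h => hb ν.down h.symm
          have := hgood ν.down hres
          simpa using this
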